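/- If a path γ : [a,b] → ℍ \ {0} never meets the real axis, then for each k ∈ ℤ the map t ↦ log|γ(t)| + Arg_{2k}(γ(t)) is a continuous continuation of the logarithm along γ, i.e. it is continuous and satisfies exp(log|γ(t)| + Arg_{2k}(γ(t))) = γ(t) for all t. -/

import Mathlib

open Quaternion Set

/-- The quaternionic exponential, given by the power series `∑ qᵏ/k!`. -/
noncomputable def qexp (q : ℍ[ℝ]) : ℍ[ℝ] := NormedSpace.exp q

/-- The slice argument `arg_ℐ(q) ∈ (0,π)` of a nonreal quaternion. -/
noncomputable def sliceArg (q : ℍ[ℝ]) : ℝ := Real.arccos (q.re / ‖q‖)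

/-- The imaginary unit `ℐ(q)` of a nonreal quaternion. -/
noncomputable def unitIm (q : ℍ[ℝ]) : ℍ[ℝ] := ‖q.im‖⁻¹ • q.im

/- `Arg(q) = ℐ(q)·arg_ℐ(q)` for nonreal `q`, and `0` on the reals. -/
open scoped Classical in
noncomputable def qArg (q : ℍ[ℝ]) : ℍ[ℝ] :=
  if q.im = 0 then 0 else sliceArg q • unitIm q

/-- The `2k`-th branch of the quaternionic argument:
`Arg_{2k}(q) = ℐ(q)·(arg_ℐ(q) + 2kπ)`. -/
noncomputable def qArg2k (k : ℤ) (q : ℍ[ℝ]) : ℍ[ℝ] :=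
  (sliceArg q + 2 * (k : ℝ) * Real.pi) • unitIm q

lemma norm_im_sq (q : ℍ[ℝ]) : ‖q.im‖^2 = ‖q‖^2 - q.re^2 := by
  have h1 : ‖q‖^2 = normSq q := by rw [sq, ← normSq_eq_norm_mul_self]
  have h2 : ‖q.im‖^2 = normSq q.im := by rw [sq, ← normSq_eq_norm_mul_self]
  rw [h1, h2, normSq_def', normSq_def']
  simp
  ring

lemma key (q : ℍ[ℝ]) (hq : q.im ≠ 0) (k : ℤ) :
    qexp (((Real.log ‖q‖ : ℝ) : ℍ[ℝ]) + qArg2k k q) = q := by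
  have hq0 : q ≠ 0 := fun h => hq (by simp [h])
  have hn : (0:ℝ) < ‖q‖ := norm_pos_iff.mpr hq0
  have him : (0:ℝ) < ‖q.im‖ := norm_pos_iff.mpr hq
  set x : ℝ := q.re / ‖q‖ with hx
  have hsq : ‖q.im‖^2 = ‖q‖^2 - q.re^2 := norm_im_sq q
  have hxlt : |x| < 1 := by
    rw [abs_div, abs_of_pos hn, div_lt_one hn]
    nlinarith [abs_nonneg q.re, sq_abs q.re]
  set θ : ℝ := sliceArg q + 2 * (k : ℝ) * Real.pi with hθ
  have hcos : Real.cos θ = x := by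
    rw [hθ, show 2 * (k:ℝ) * Real.pi = (k:ℝ) * (2 * Real.pi) by ring,
      Real.cos_add_int_mul_two_pi, sliceArg,
      Real.cos_arccos (by linarith [abs_lt.mp hxlt]) (by linarith [abs_lt.mp hxlt])]
  have hsin : Real.sin θ = ‖q.im‖ / ‖q‖ := by
    rw [hθ, show 2 * (k:ℝ) * Real.pi = (k:ℝ) * (2 * Real.pi) by ring,
      Real.sin_add_int_mul_two_pi, sliceArg, Real.sin_arccos]
    rw [show (1:ℝ) - x^2 = (‖q.im‖/‖q‖)^2 by
      rw [div_pow, div_pow, hsq]; field_simp]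
    exact Real.sqrt_sq (by positivity)
  have hθpos : θ ≠ 0 := by
    intro h
    have : Real.sin θ = 0 := by rw [h, Real.sin_zero]
    rw [hsin] at this
    exact (div_pos him hn).ne' this
  have hure : (unitIm q).re = 0 := by simp [unitIm, re_smul]
  have huim : (unitIm q).im = unitIm q := by
    ext <;> simp [unitIm, hure]
  have hunorm : ‖unitIm q‖ = 1 := by
    rw [unitIm, norm_smul, norm_inv, norm_norm, inv_mul_cancel₀ him.ne']
  set L : ℍ[ℝ] := ((Real.log ‖q‖ : ℝ) : ℍ[ℝ]) + qArg2k k q with hL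
  have hLre : L.re = Real.log ‖q‖ := by
    simp [hL, qArg2k, re_smul, hure]
  have hLim : L.im = θ • unitIm q := by
    ext <;> simp [hL, qArg2k, unitIm, hθ]
  have hLimnorm : ‖θ • unitIm q‖ = |θ| := by
    rw [norm_smul, hunorm, mul_one, Real.norm_eq_abs]
  rw [qexp, Quaternion.exp_eq, hLre, hLim, hLimnorm, ← Real.exp_eq_exp_ℝ, Real.exp_log hn, Real.cos_abs]
  have hsmul : (Real.sin |θ| / |θ|) • (θ • unitIm q) = Real.sin θ • unitIm q := by
    rw [smul_smul]
    congr 1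
    rcases abs_cases θ with ⟨h1, _⟩ | ⟨h1, _⟩ <;> rw [h1]
    · field_simp
    · rw [Real.sin_neg]
      field_simp
  rw [hsmul, hcos, hsin]
  have : (↑x + (‖q.im‖ / ‖q‖) • unitIm q : ℍ[ℝ]) = ‖q‖⁻¹ • q := by
    ext <;> simp [unitIm, smul_smul]
    · rw [hx]; field_simp
    all_goals left; field_simp
  rw [this, smul_smul, mul_inv_cancel₀ hn.ne', one_smul]

theorem branch_log_along_path (a b : ℝ) (hab : a ≤ b) (γ : ℝ → ℍ[ℝ])
    (hγ : ContinuousOn γ (Icc a b)) (hne : ∀ t ∈ Icc a b, γ t ≠ 0)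
    (hreal : ∀ t ∈ Icc a b, (γ t).im ≠ 0) (k : ℤ) :
    ContinuousOn (fun t => ((Real.log ‖γ t‖ : ℝ) : ℍ[ℝ]) + qArg2k k (γ t)) (Icc a b) ∧
      ∀ t ∈ Icc a b, qexp (((Real.log ‖γ t‖ : ℝ) : ℍ[ℝ]) + qArg2k k (γ t)) = γ t := by
  have hnorm : ∀ t ∈ Icc a b, ‖γ t‖ ≠ 0 := fun t ht => norm_ne_zero_iff.mpr (hne t ht)
  have himn : ∀ t ∈ Icc a b, ‖(γ t).im‖ ≠ 0 := fun t ht => norm_ne_zero_iff.mpr (hreal t ht)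
  constructor
  · have h1 : ContinuousOn (fun t => ((Real.log ‖γ t‖ : ℝ) : ℍ[ℝ])) (Icc a b) :=
      continuous_coe.comp_continuousOn (hγ.norm.log hnorm)
    have hre : ContinuousOn (fun t => (γ t).re) (Icc a b) :=
      continuous_re.comp_continuousOn hγ
    have him : ContinuousOn (fun t => (γ t).im) (Icc a b) :=
      continuous_im.comp_continuousOn hγ
    have hslice : ContinuousOn (fun t => sliceArg (γ t)) (Icc a b) :=
      Real.continuous_arccos.comp_continuousOn (hre.div hγ.norm hnorm)
    have hunit : ContinuousOn (fun t => unitIm (γ t)) (Icc a b) :=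
      (him.norm.inv₀ himn).smul him
    have h2 : ContinuousOn (fun t => qArg2k k (γ t)) (Icc a b) :=
      (hslice.add continuousOn_const).smul hunit
    exact h1.add h2
  · exact fun t ht => key (γ t) (hreal t ht) k
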